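/- Let (x_n) be a statistically convergent sequence in an S-metric space (X,S), with statistical limit x. Then there exists a sequence (y_n) in X converging to x such that x_n = y_n for almost all n, i.e. δ({n : y_n ≠ x_n}) = 0. -/

import Mathlib

open Filter

open scoped Classical in
/-- Natural density: `A ⊆ ℕ` has density `d` if `|{k ∈ A : k < n}|/n → d`. -/
def HasDensity (A : Set ℕ) (d : ℝ) : Prop :=
  Filter.Tendsto
    (fun n : ℕ => (((Finset.range n).filter (fun k => k ∈ A)).card : ℝ) / n)
    Filter.atTop (nhds d)

/-- `S` is an S-metric on `X`. -/
structure IsSMetric {X : Type*} (S : X → X → X → ℝ) : Prop where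
  nonneg : ∀ x y z, 0 ≤ S x y z
  eq_zero_iff : ∀ x y z, S x y z = 0 ↔ x = y ∧ y = z
  triangle : ∀ x y z a, S x y z ≤ S x x a + S y y a + S z z a

/-- Ordinary convergence of a sequence in an S-metric space. -/
def SConvergesTo {X : Type*} (S : X → X → X → ℝ) (x : ℕ → X) (l : X) : Prop :=
  ∀ ε : ℝ, 0 < ε → ∃ N : ℕ, ∀ n ≥ N, S (x n) (x n) l < ε

/-- Statistical convergence of a sequence in an S-metric space. -/
def SStatConvergesTo {X : Type*} (S : X → X → X → ℝ) (x : ℕ → X) (l : X) : Prop :=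
  ∀ ε : ℝ, 0 < ε → HasDensity {n : ℕ | ε ≤ S (x n) (x n) l} 0

/-- Cauchy sequence in an S-metric space. -/
def SCauchy {X : Type*} (S : X → X → X → ℝ) (x : ℕ → X) : Prop :=
  ∀ ε : ℝ, 0 < ε → ∃ k : ℕ, ∀ n ≥ k, ∀ m ≥ k, S (x n) (x n) (x m) < ε

/-- Statistically Cauchy sequence in an S-metric space. -/
def SStatCauchy {X : Type*} (S : X → X → X → ℝ) (x : ℕ → X) : Prop :=
  ∀ ε : ℝ, 0 < ε → ∃ N : ℕ, HasDensity {n : ℕ | ε ≤ S (x n) (x n) (x N)} 0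

/-- Statistically bounded sequence in an S-metric space. -/
def SStatBounded {X : Type*} (S : X → X → X → ℝ) (x : ℕ → X) : Prop :=
  ∀ u : X, ∃ B : ℝ, 0 < B ∧ HasDensity {n : ℕ | B ≤ S (x n) (x n) u} 0

/-- Rough convergence with roughness degree `r`. -/
def SRoughConvergesTo {X : Type*} (S : X → X → X → ℝ) (r : ℝ) (x : ℕ → X) (p : X) : Prop :=
  ∀ ε : ℝ, 0 < ε → ∃ k : ℕ, ∀ n ≥ k, S (x n) (x n) p < r + ε

/-- Rough statistical convergence with roughness degree `r`. -/
def SRoughStatConvergesTo {X : Type*} (S : X → X → X → ℝ) (r : ℝ) (x : ℕ → X) (p : X) : Prop :=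
  ∀ ε : ℝ, 0 < ε → HasDensity {n : ℕ | r + ε ≤ S (x n) (x n) p} 0

/-- The rough statistical limit set `st-LIM^r x_n`. -/
def stLIM {X : Type*} (S : X → X → X → ℝ) (r : ℝ) (x : ℕ → X) : Set X :=
  {p : X | SRoughStatConvergesTo S r x p}

/-- The topology on `X` generated by the open balls of the S-metric. -/
def sBallTopology {X : Type*} (S : X → X → X → ℝ) : TopologicalSpace X :=
  TopologicalSpace.generateFrom
    {B : Set X | ∃ c : X, ∃ ε : ℝ, 0 < ε ∧ B = {y : X | S y y c < ε}}

theorem stmt_4 {X : Type*} [Nonempty X] (S : X → X → X → ℝ) (hS : IsSMetric S)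
    (x : ℕ → X) (l : X) (h : SStatConvergesTo S x l) :
    ∃ y : ℕ → X, SConvergesTo S y l ∧ HasDensity {n : ℕ | y n ≠ x n} 0 := by
  classical
  have hll : S l l l = 0 := (hS.eq_zero_iff l l l).2 ⟨rfl, rfl⟩
  have hN : ∀ j : ℕ, ∃ N : ℕ, ∀ n ≥ N,
      (((Finset.range n).filter (fun m => (1:ℝ)/(j+1) ≤ S (x m) (x m) l)).card : ℝ) / n
        < 1/(j+1) := by
    intro j
    have hpos : (0:ℝ) < 1/(j+1) := by positivity
    have htd := h (1/(j+1)) hpos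
    rw [HasDensity, Metric.tendsto_atTop] at htd
    obtain ⟨N, hNspec⟩ := htd (1/(j+1)) hpos
    refine ⟨N, fun n hn => ?_⟩
    have h2 := hNspec n hn
    rw [Real.dist_eq, sub_zero, abs_of_nonneg (by positivity)] at h2
    convert h2 using 3
    congr 1
  choose N hNs using hN
  let M : ℕ → ℕ := fun k => Nat.rec 0 (fun k mk => max (mk + 1) (N (k+1))) k
  have hM0 : M 0 = 0 := rfl
  have hMsucc : ∀ k, M (k+1) = max (M k + 1) (N (k+1)) := fun k => rfl
  have hkM : ∀ k, k ≤ M k := by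
    intro k
    induction k with
    | zero => exact le_refl 0
    | succ k ih =>
      rw [hMsucc]
      exact le_trans (Nat.succ_le_succ ih) (le_max_left _ _)
  have hNM : ∀ k, 1 ≤ k → N k ≤ M k := by
    intro k hk
    obtain ⟨j, rfl⟩ := Nat.exists_eq_add_of_le hk
    rw [add_comm, hMsucc]
    exact le_max_right _ _
  let K : ℕ → ℕ := fun n => @Nat.findGreatest (fun k => M k ≤ n) (fun _ => Nat.decLe _ _) n
  have hMK : ∀ n, M (K n) ≤ n := by
    intro n
    exact @Nat.findGreatest_spec 0 (fun k => M k ≤ n) (fun _ => Nat.decLe _ _) n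
      (Nat.zero_le n) (by simp [hM0])
  have hKge : ∀ k n, M k ≤ n → k ≤ K n := fun k n hk =>
    @Nat.le_findGreatest k (fun j => M j ≤ n) (fun _ => Nat.decLe _ _) n
      (le_trans (hkM k) hk) hk
  have hKle : ∀ n, K n ≤ n := fun n =>
    @Nat.findGreatest_le (fun j => M j ≤ n) (fun _ => Nat.decLe _ _) n
  have hKmono : ∀ m n, m ≤ n → K m ≤ K n := fun m n hmn =>
    @Nat.le_findGreatest (K m) (fun j => M j ≤ n) (fun _ => Nat.decLe _ _) n
      (le_trans (hKle m) hmn) (le_trans (hMK m) hmn)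
  refine ⟨fun n => if S (x n) (x n) l < 1/((K n : ℝ)+1) then x n else l, ?_, ?_⟩
  · -- convergence
    intro ε hε
    obtain ⟨k, hk⟩ := exists_nat_one_div_lt hε
    refine ⟨M k, fun n hn => ?_⟩
    dsimp only
    by_cases hc : S (x n) (x n) l < 1/((K n : ℝ)+1)
    · rw [if_pos hc]
      have hkK : k ≤ K n := hKge k n hn
      calc S (x n) (x n) l < 1/((K n : ℝ)+1) := hc
        _ ≤ 1/((k:ℝ)+1) := one_div_le_one_div_of_le (by positivity)
            (by exact_mod_cast Nat.succ_le_succ hkK)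
        _ < ε := hk
    · rw [if_neg hc, hll]; exact hε
  · -- density
    dsimp only
    unfold HasDensity
    rw [Metric.tendsto_atTop]
    intro ε hε
    obtain ⟨k₀, hk₀⟩ := exists_nat_one_div_lt hε
    set k := max k₀ 1 with hkdef
    refine ⟨M k, fun n hn => ?_⟩
    have hkK : k ≤ K n := hKge k n hn
    have hK1 : 1 ≤ K n := le_trans (le_max_right _ _) hkK
    have hnpos : 0 < n :=
      lt_of_lt_of_le (lt_of_lt_of_le Nat.zero_lt_one
        (le_trans (le_max_right k₀ 1) (hkM k))) hn
    rw [Real.dist_eq, sub_zero, abs_of_nonneg (by positivity)]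
    have hcard : ((Finset.range n).filter
        (fun m => m ∈ ({i : ℕ |
          (if S (x i) (x i) l < 1/((K i : ℝ)+1) then x i else l) ≠ x i} : Set ℕ))).card
        ≤ ((Finset.range n).filter
          (fun m => (1:ℝ)/((K n : ℝ)+1) ≤ S (x m) (x m) l)).card := by
      apply Finset.card_le_card
      intro m hm
      simp only [Finset.mem_filter, Finset.mem_range, Set.mem_setOf_eq] at hm ⊢
      refine ⟨hm.1, ?_⟩
      have hne := hm.2
      have hnot : ¬ (S (x m) (x m) l < 1/((K m : ℝ)+1)) := by
        intro hlt; exact hne (if_pos hlt)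
      have h1 : (1:ℝ)/((K m : ℝ)+1) ≤ S (x m) (x m) l := le_of_not_gt hnot
      have h2 : (1:ℝ)/((K n : ℝ)+1) ≤ 1/((K m : ℝ)+1) := by
        gcongr
        exact_mod_cast hKmono m n (le_of_lt hm.1)
      exact le_trans h2 h1
    have hq := hNs (K n) n (le_trans (hNM (K n) hK1) (hMK n))
    have hlt : (((Finset.range n).filter
          (fun m => (1:ℝ)/((K n : ℝ)+1) ≤ S (x m) (x m) l)).card : ℝ) / n < ε := by
      calc (((Finset.range n).filter
            (fun m => (1:ℝ)/((K n : ℝ)+1) ≤ S (x m) (x m) l)).card : ℝ) / n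
          < 1/((K n : ℝ)+1) := hq
        _ ≤ 1/((k₀ : ℝ)+1) := one_div_le_one_div_of_le (by positivity)
            (by exact_mod_cast Nat.succ_le_succ (le_trans (le_max_left k₀ 1) hkK))
        _ < ε := hk₀
    refine lt_of_le_of_lt ?_ hlt
    apply div_le_div_of_nonneg_right ?_ ?_ |>.trans_eq rfl
    · exact_mod_cast hcard
    · exact_mod_cast Nat.zero_le n
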